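/- Let $\Omega$ be a commutative semigroup, $(Z, \ast_{\alpha,\beta})_{\alpha,\beta\in\Omega}$ an $\Omega$-zinbiel algebra, and $p_\alpha, q_\alpha: Z\to Z$ two commuting families of $\Omega$-zinbiel algebra morphisms. Define $x\circledast_{\alpha,\beta}y := p_\alpha(x)\ast_{\alpha,\beta}q_\beta(y)$. Then $(Z, \circledast_{\alpha,\beta}, p_\alpha, q_\alpha)_{\alpha,\beta\in\Omega}$ is a BiHom-$\Omega$-zinbiel algebra, i.e., $p_\alpha q_\alpha(x)\circledast_{\alpha,\beta\gamma}(p_\beta(y)\circledast_{\beta,\gamma}z) = (q_\alpha(x)\circledast_{\alpha,\beta}p_\beta(y))\circledast_{\alpha\beta,\gamma}q_\gamma(z) + (q_\beta(y)\circledast_{\beta,\alpha}p_\alpha(x))\circledast_{\beta\alpha,\gamma}q_\gamma(z)$ for all $x, y, z \in Z$ and $\alpha,\beta,\gamma\in\Omega$. -/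
import Mathlib


/-- Yau twist of an Ω-zinbiel algebra gives a BiHom-Ω-zinbiel algebra. -/
theorem stmt_19
    {K : Type*} [Field K] {Ω : Type*} [CommSemigroup Ω]
    {Z : Type*} [AddCommGroup Z] [Module K Z]
    (ast : Ω → Ω → Z →ₗ[K] Z →ₗ[K] Z)
    (p q : Ω → Z →ₗ[K] Z)
    -- Ω-zinbiel identity
    (hzin : ∀ (α β γ : Ω) (x y z : Z),
      ast α (β * γ) x (ast β γ y z)
        = ast (α * β) γ (ast α β x y) z + ast (β * α) γ (ast β α y x) z)
    -- p, q are Ω-zinbiel algebra morphisms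
    (hp : ∀ (α β : Ω) (x y : Z), p (α * β) (ast α β x y) = ast α β (p α x) (p β y))
    (hq : ∀ (α β : Ω) (x y : Z), q (α * β) (ast α β x y) = ast α β (q α x) (q β y))
    -- the families commute
    (hpq : ∀ (α : Ω) (x : Z), p α (q α x) = q α (p α x))
    -- the twisted operation
    (cast : Ω → Ω → Z → Z → Z)
    (hcast : ∀ (α β : Ω) (x y : Z), cast α β x y = ast α β (p α x) (q β y)) :
    -- (Z, cast, p, q) is a BiHom-Ω-zinbiel algebra
    (∀ (α β : Ω) (x y : Z), p (α * β) (cast α β x y) = cast α β (p α x) (p β y)) ∧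
    (∀ (α β : Ω) (x y : Z), q (α * β) (cast α β x y) = cast α β (q α x) (q β y)) ∧
    (∀ (α β γ : Ω) (x y z : Z),
      cast α (β * γ) (p α (q α x)) (cast β γ (p β y) z)
        = cast (α * β) γ (cast α β (q α x) (p β y)) (q γ z)
          + cast (β * α) γ (cast β α (q β y) (p α x)) (q γ z)) := by
  refine ⟨fun α β x y => by simp [hcast, hp, hpq], fun α β x y => by simp [hcast, hq, hpq], fun α β γ x y z => ?_⟩
  simp only [hcast, hp, hq, hpq]
  exact hzin α β γ _ _ _
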